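/- Every coefficient of Φ_{pq}(x) for distinct primes p, q has absolute value at most 1 (the height of Φ_{pq} is 1). -/

import Mathlib

open Polynomial

/-- The indicator power series `∑_{p ∣ n} X^n`, inverse of `1 - X^p`. -/
noncomputable def geomInd (p : ℕ) : PowerSeries ℤ :=
  PowerSeries.mk fun n => if p ∣ n then 1 else 0

lemma geomInd_inv (p : ℕ) (hp : 0 < p) :
    (1 - (PowerSeries.X : PowerSeries ℤ) ^ p) * geomInd p = 1 := by
  ext n
  rw [sub_mul, one_mul, map_sub, PowerSeries.coeff_X_pow_mul', PowerSeries.coeff_one]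
  simp only [geomInd, PowerSeries.coeff_mk]
  rcases Nat.eq_zero_or_pos n with rfl | hn
  · simp [hp.ne']
  · have hne : n ≠ 0 := hn.ne'
    by_cases hd : p ∣ n
    · have hpn : p ≤ n := Nat.le_of_dvd hn hd
      have hd' : p ∣ n - p := (Nat.dvd_sub hd dvd_rfl)
      simp [hpn, hd, hd', hne]
    · by_cases hpn : p ≤ n
      · have hd' : ¬ p ∣ n - p := by
          intro h
          exact hd (by
            have := Nat.dvd_add h (dvd_refl p)
            rwa [Nat.sub_add_cancel hpn] at this)
        simp [hpn, hd, hd', hne]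
      · simp [hpn, hd, hne]

/-- Every coefficient of `Φ_{pq}(x)`, for distinct primes `p`, `q`, has
absolute value at most `1` (the height of `Φ_{pq}` is `1`). -/
theorem stmt7 (p q : ℕ) (hp : p.Prime) (hq : q.Prime) (hpq : p ≠ q) :
    ∀ k : ℕ, |(cyclotomic (p * q) ℤ).coeff k| ≤ 1 := by
  intro k
  have hp1 := hp.one_lt
  have hq1 := hq.one_lt
  have hcop : Nat.Coprime p q := (Nat.coprime_primes hp hq).mpr hpq
  by_cases hk : p * q ≤ k
  · -- beyond the degree, the coefficient vanishes
    have hdeg : (cyclotomic (p * q) ℤ).natDegree < k := by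
      rw [natDegree_cyclotomic, Nat.totient_mul hcop, Nat.totient_prime hp,
        Nat.totient_prime hq]
      have e1 : p - 1 < p := by omega
      have e2 : q - 1 < q := by omega
      have := Nat.mul_lt_mul'' e1 e2
      omega
    rw [coeff_eq_zero_of_natDegree_lt hdeg]
    norm_num
  push_neg at hk
  haveI : Fact q.Prime := ⟨hq⟩
  have hndvd : ¬ p ∣ q := fun h => hpq ((Nat.prime_dvd_prime_iff_eq hp hq).mp h)
  -- the polynomial identity Φ_{pq}·(X^p-1)·(X^q-1) = (X^{pq}-1)·(X-1)
  have h1 : expand ℤ p (cyclotomic q ℤ) = cyclotomic (q * p) ℤ * cyclotomic q ℤ :=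
    cyclotomic_expand_eq_cyclotomic_mul hp hndvd ℤ
  have h2 : cyclotomic q ℤ * (X - 1) = (X : ℤ[X]) ^ q - 1 :=
    cyclotomic_prime_mul_X_sub_one ℤ q
  have h3 : (expand ℤ p) ((X : ℤ[X]) ^ q - 1) = (X : ℤ[X]) ^ (p * q) - 1 := by
    rw [map_sub, map_one, map_pow, expand_X, ← pow_mul]
  have h4 : (expand ℤ p) (cyclotomic q ℤ * (X - 1))
      = cyclotomic (q * p) ℤ * cyclotomic q ℤ * ((X : ℤ[X]) ^ p - 1) := by
    rw [map_mul, h1, map_sub, map_one, expand_X]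
  rw [h2, h3] at h4
  have hcomm : cyclotomic (p * q) ℤ = cyclotomic (q * p) ℤ := by rw [mul_comm]
  have hE : cyclotomic (p * q) ℤ * (((X : ℤ[X]) ^ p - 1) * ((X : ℤ[X]) ^ q - 1))
      = ((X : ℤ[X]) ^ (p * q) - 1) * (X - 1) := by
    rw [hcomm, ← h2, h4]; ring
  -- move to power series
  have hPS : (cyclotomic (p * q) ℤ : PowerSeries ℤ) *
      (((PowerSeries.X : PowerSeries ℤ) ^ p - 1) * ((PowerSeries.X : PowerSeries ℤ) ^ q - 1))
      = ((PowerSeries.X : PowerSeries ℤ) ^ (p * q) - 1) * (PowerSeries.X - 1) := by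
    have := congrArg (fun f : ℤ[X] => (f : PowerSeries ℤ)) hE
    simpa only [Polynomial.coe_mul, Polynomial.coe_sub, Polynomial.coe_pow,
      Polynomial.coe_X, Polynomial.coe_one] using this
  set B : PowerSeries ℤ := geomInd p * geomInd q with hB
  have hF : (cyclotomic (p * q) ℤ : PowerSeries ℤ)
      = ((PowerSeries.X : PowerSeries ℤ) ^ (p * q) - 1) * (PowerSeries.X - 1) * B := by
    have gp := geomInd_inv p hp.pos
    have gq := geomInd_inv q hq.pos
    calc (cyclotomic (p * q) ℤ : PowerSeries ℤ)
        = (cyclotomic (p * q) ℤ : PowerSeries ℤ) *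
            (((1 - (PowerSeries.X : PowerSeries ℤ) ^ p) * geomInd p) *
             ((1 - (PowerSeries.X : PowerSeries ℤ) ^ q) * geomInd q)) := by
          rw [gp, gq]; ring
      _ = (cyclotomic (p * q) ℤ : PowerSeries ℤ) *
            (((PowerSeries.X : PowerSeries ℤ) ^ p - 1) *
             ((PowerSeries.X : PowerSeries ℤ) ^ q - 1)) * B := by
          rw [hB]; ring
      _ = ((PowerSeries.X : PowerSeries ℤ) ^ (p * q) - 1) * (PowerSeries.X - 1) * B := by
          rw [hPS]
  -- coefficients of B
  have hr_nonneg : ∀ m : ℕ, 0 ≤ PowerSeries.coeff m B := by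
    intro m
    rw [hB, PowerSeries.coeff_mul]
    apply Finset.sum_nonneg
    intro x _
    simp only [geomInd, PowerSeries.coeff_mk]
    by_cases h1 : p ∣ x.1 <;> by_cases h2 : q ∣ x.2 <;> simp [h1, h2]
  have hr_le : ∀ m : ℕ, m < p * q → PowerSeries.coeff m B ≤ 1 := by
    intro m hm
    rw [hB, PowerSeries.coeff_mul]
    have hcongr : ∀ x ∈ Finset.HasAntidiagonal.antidiagonal m,
        (PowerSeries.coeff x.1 (geomInd p)) * (PowerSeries.coeff x.2 (geomInd q))
        = if p ∣ x.1 ∧ q ∣ x.2 then (1 : ℤ) else 0 := by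
      intro x _
      simp only [geomInd, PowerSeries.coeff_mk]
      by_cases h1 : p ∣ x.1 <;> by_cases h2 : q ∣ x.2 <;> simp [h1, h2]
    rw [Finset.sum_congr rfl hcongr, Finset.sum_boole]
    have hcard : ((Finset.HasAntidiagonal.antidiagonal m).filter fun x => p ∣ x.1 ∧ q ∣ x.2).card ≤ 1 := by
      apply Finset.card_le_one.mpr
      intro a ha b hb
      simp only [Finset.mem_filter, Finset.HasAntidiagonal.mem_antidiagonal] at ha hb
      obtain ⟨hasum, hap, haq⟩ := ha
      obtain ⟨hbsum, hbp, hbq⟩ := hb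
      have key : ∀ x y : ℕ × ℕ, x.1 + x.2 = m → y.1 + y.2 = m → p ∣ x.1 → q ∣ x.2 →
          p ∣ y.1 → q ∣ y.2 → x.1 ≤ y.1 → x = y := by
        intro x y hx hy hxp hxq hyp hyq hle
        have hdiff : y.1 - x.1 = x.2 - y.2 := by omega
        have hdvdp : p ∣ y.1 - x.1 := Nat.dvd_sub hyp hxp
        have hdvdq : q ∣ y.1 - x.1 := by
          rw [hdiff]; exact Nat.dvd_sub hxq hyq
        have hdvd : p * q ∣ y.1 - x.1 := hcop.mul_dvd_of_dvd_of_dvd hdvdp hdvdq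
        have hlt : y.1 - x.1 < p * q := by omega
        have hz : y.1 - x.1 = 0 := Nat.eq_zero_of_dvd_of_lt hdvd hlt
        exact Prod.ext (by omega) (by omega)
      rcases le_total a.1 b.1 with h | h
      · exact key a b hasum hbsum hap haq hbp hbq h
      · exact (key b a hbsum hasum hbp hbq hap haq h).symm
    exact_mod_cast hcard
  -- assemble
  have hkey : (cyclotomic (p * q) ℤ).coeff k
      = PowerSeries.coeff k (((PowerSeries.X : PowerSeries ℤ) ^ (p * q) - 1) *
          (PowerSeries.X - 1) * B) := by
    rw [← Polynomial.coeff_coe, hF]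
  have hsplit : ((PowerSeries.X : PowerSeries ℤ) ^ (p * q) - 1) * (PowerSeries.X - 1) * B
      = PowerSeries.X ^ (p * q) * (PowerSeries.X ^ 1 * B)
        - PowerSeries.X ^ (p * q) * B - PowerSeries.X ^ 1 * B + B := by
    ring
  rw [hkey, hsplit]
  simp only [map_add, map_sub, PowerSeries.coeff_X_pow_mul']
  rw [if_neg (not_le.mpr hk), if_neg (not_le.mpr hk)]
  have h0k : 0 ≤ PowerSeries.coeff k B := hr_nonneg k
  have h1k : PowerSeries.coeff k B ≤ 1 := hr_le k hk
  by_cases hk1 : 1 ≤ k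
  · rw [if_pos hk1]
    have h0k' : 0 ≤ PowerSeries.coeff (k - 1) B := hr_nonneg (k - 1)
    have h1k' : PowerSeries.coeff (k - 1) B ≤ 1 := hr_le (k - 1) (by omega)
    rw [abs_le]
    constructor <;> linarith
  · rw [if_neg hk1, abs_le]
    constructor <;> linarith
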